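/- arXiv:1711.00620 — 3 statements merged into one kernel-verified Lean document; each statement's English description precedes it below -/
import Mathlib

section
/- Non-degeneracy of the phase: let 0 < r < 1 and p(ξ) = arccos(r cos ξ). Then for every ξ ∈ ℝ, ((1+2r²)/(1−r²))² p''(ξ)² + p'''(ξ)² ≥ r²(1−r²)². In particular p''(ξ) and p'''(ξ) never vanish simultaneously, so min_{ξ∈𝕋} max(|p''(ξ)|, |p'''(ξ)|) > 0. -/
noncomputable section

open Filter MeasureTheory
open scoped BigOperators ComplexConjugate

/-- The state space component `ℂ²`. -/
abbrev C2 := EuclideanSpace ℂ (Fin 2)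

/-- Operator norm of a `2 × 2` complex matrix acting on `ℂ²`. -/
def matOpNorm (M : Matrix (Fin 2) (Fin 2) ℂ) : ℝ :=
  ‖Matrix.toEuclideanCLM (𝕜 := ℂ) M‖

/-- The vector `(z, w)ᵗ ∈ ℂ²`. -/
def vec2 (z w : ℂ) : C2 := (WithLp.equiv 2 (Fin 2 → ℂ)).symm ![z, w]

/-- Apply a `2 × 2` matrix to a vector in `ℂ²`. -/
def applyMat (M : Matrix (Fin 2) (Fin 2) ℂ) (v : C2) : C2 :=
  Matrix.toEuclideanCLM (𝕜 := ℂ) M v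

/-- The `ℓ^p` norm of a state `u : ℤ → ℂ²`. -/
def lpNorm (p : ℝ) (u : ℤ → C2) : ℝ := (∑' x : ℤ, ‖u x‖ ^ p) ^ (1/p)

/-- The `ℓ^∞` norm of a state. -/
def linfNorm (u : ℤ → C2) : ℝ := ⨆ x : ℤ, ‖u x‖

/-- The constant coin matrix `C₀`. -/
def C0mat (a b : ℂ) : Matrix (Fin 2) (Fin 2) ℂ :=
  !![a, b; -(starRingEnd ℂ) b, (starRingEnd ℂ) a]

/-- The shift `S`: `(Su)(x) = (u₁(x+1), u₂(x−1))ᵗ`. -/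
def shiftS (u : ℤ → C2) : ℤ → C2 := fun x => vec2 (u (x+1) 0) (u (x-1) 1)

/-- The (nonlinear) coin operator `Ĉ`: `(Ĉu)(x) = C(|u₁(x)|², |u₂(x)|²) u(x)`. -/
def coinApply (C : ℝ → ℝ → Matrix (Fin 2) (Fin 2) ℂ) (u : ℤ → C2) : ℤ → C2 :=
  fun x => applyMat (C (‖u x 0‖^2) (‖u x 1‖^2)) (u x)

/-- One step of a quantum walk with coin map `C`: `U = S ∘ Ĉ`. -/
def genStep (C : ℝ → ℝ → Matrix (Fin 2) (Fin 2) ℂ) (u : ℤ → C2) : ℤ → C2 :=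
  shiftS (coinApply C u)

/-- The `t`-step evolution of a quantum walk with coin map `C`. -/
def genEvolve (C : ℝ → ℝ → Matrix (Fin 2) (Fin 2) ℂ) (t : ℕ) (u0 : ℤ → C2) : ℤ → C2 :=
  (genStep C)^[t] u0

/-- One step of the linear walk `U₀ = S ∘ Ĉ₀`. -/
def U0step (a b : ℂ) : (ℤ → C2) → (ℤ → C2) := genStep (fun _ _ => C0mat a b)

/-- The linear evolution `U₀ᵗ`. -/
def linEvolve (a b : ℂ) (t : ℕ) (u0 : ℤ → C2) : ℤ → C2 := (U0step a b)^[t] u0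

/-- The inverse linear step `U₀⁻¹ = Ĉ₀⁻¹ ∘ S⁻¹`. -/
def U0inv (a b : ℂ) (u : ℤ → C2) : ℤ → C2 :=
  fun x => applyMat (Matrix.conjTranspose (C0mat a b)) (vec2 (u (x-1) 0) (u (x+1) 1))

/-- The full nonlinear coin `C(s₁,s₂) = C₀ · C_N(s₁,s₂)`. -/
def nlCoin (a b : ℂ) (CN : ℝ → ℝ → Matrix (Fin 2) (Fin 2) ℂ) :
    ℝ → ℝ → Matrix (Fin 2) (Fin 2) ℂ :=
  fun s₁ s₂ => C0mat a b * CN s₁ s₂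

/-- The nonlinear quantum walk `U(t)u₀` with coin `C = C₀ C_N`. -/
def nlEvolve (a b : ℂ) (CN : ℝ → ℝ → Matrix (Fin 2) (Fin 2) ℂ) (t : ℕ) (u0 : ℤ → C2) :
    ℤ → C2 :=
  genEvolve (nlCoin a b CN) t u0

/-- `U(t)u₀` scatters: there is `u₊ ∈ ℓ²` with `‖U(t)u₀ − U₀ᵗu₊‖_{ℓ²} → 0`. -/
def scatters (a b : ℂ) (CN : ℝ → ℝ → Matrix (Fin 2) (Fin 2) ℂ) (u0 : ℤ → C2) : Prop :=
  ∃ uplus : ℤ → C2, Summable (fun x => ‖uplus x‖ ^ (2:ℝ)) ∧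
    Tendsto (fun t : ℕ =>
        lpNorm 2 (fun x => nlEvolve a b CN t u0 x - linEvolve a b t uplus x))
      atTop (nhds 0)

/-- Japanese bracket `⟨t⟩ = (1+t²)^{1/2}`. -/
def jap (t : ℕ) : ℝ := Real.sqrt (1 + (t:ℝ)^2)

/-- Discrete Fourier transform `(Fu)(ξ) = Σ_x e^{−ixξ} u(x)`. -/
def dFourier (u : ℤ → C2) (ξ : ℝ) : C2 :=
  ∑' x : ℤ, Complex.exp (-(Complex.I) * (x:ℂ) * (ξ:ℂ)) • u x

/-- `w(ξ) = Re(e^{iξ}a)`. -/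
def wfun (a : ℂ) (ξ : ℝ) : ℝ := (Complex.exp (Complex.I * (ξ:ℂ)) * a).re

/-- `λ₊(ξ) = w(ξ) + i√(1−w(ξ)²)`. -/
def lamPlus (a : ℂ) (ξ : ℝ) : ℂ :=
  (wfun a ξ : ℂ) + Complex.I * ((Real.sqrt (1 - (wfun a ξ)^2) : ℝ) : ℂ)

/-- `λ₋(ξ) = w(ξ) − i√(1−w(ξ)²)`. -/
def lamMinus (a : ℂ) (ξ : ℝ) : ℂ :=
  (wfun a ξ : ℂ) - Complex.I * ((Real.sqrt (1 - (wfun a ξ)^2) : ℝ) : ℂ)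

/-- The diagonalizing matrix `P(ξ)`. -/
def Pmat (a b : ℂ) (ξ : ℝ) : Matrix (Fin 2) (Fin 2) ℂ :=
  (((‖b‖^2 + ‖Complex.exp (Complex.I * (ξ:ℂ)) * a - lamPlus a ξ‖^2 : ℝ) : ℂ))⁻¹ •
    !![ -Complex.exp (-(Complex.I) * (ξ:ℂ)) * (starRingEnd ℂ) b,
          -Complex.exp (-(Complex.I) * (ξ:ℂ)) * a + lamMinus a ξ;
        -Complex.exp (Complex.I * (ξ:ℂ)) * a + lamPlus a ξ,
          -Complex.exp (Complex.I * (ξ:ℂ)) * b ]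

/-- `Q₊(ξ)` (for `sgn = true`) and `Q₋(ξ)` (for `sgn = false`). -/
def Qpm (a b : ℂ) (sgn : Bool) (ξ : ℝ) : Matrix (Fin 2) (Fin 2) ℂ :=
  (Pmat a b (ξ - Complex.arg a))⁻¹ *
    (if sgn then !![1,0;0,0] else !![0,0;0,1]) * Pmat a b (ξ - Complex.arg a)

/-- `p(ξ) = arccos(|a| cos ξ)`. -/
def pfun (a : ℂ) (ξ : ℝ) : ℝ := Real.arccos (‖a‖ * Real.cos ξ)

/-- `p'(ξ) = |a| sin ξ / √(1 − |a|² cos² ξ)`. -/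
def pderiv (a : ℂ) (ξ : ℝ) : ℝ :=
  ‖a‖ * Real.sin ξ / Real.sqrt (1 - ‖a‖^2 * (Real.cos ξ)^2)

/-- The Konno function `f_K(v;r)`. -/
def konno (r v : ℝ) : ℝ :=
  if |v| < r then Real.sqrt (1 - r^2) / (Real.pi * (1 - v^2) * Real.sqrt (r^2 - v^2)) else 0

/-- `ξ_{±,m}(v) = mπ + arcsin(∓(−1)^m |b| v /(|a|√(1−v²)))`; `sgn = true` is `+`. -/
def xiPM (a b : ℂ) (sgn : Bool) (m : ℕ) (v : ℝ) : ℝ :=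
  m * Real.pi +
    Real.arcsin (((if sgn then (-1:ℝ) else 1) * (-1)^m * ‖b‖ * v) / (‖a‖ * Real.sqrt (1 - v^2)))

/-- `P_{±,m}(ξ) = ⟨û₊(ξ−θ_a), Q_±(ξ) û₊(ξ−θ_a)⟩_{ℂ²}`. -/
def PpmVal (a b : ℂ) (uplus : ℤ → C2) (sgn : Bool) (ξ : ℝ) : ℂ :=
  @inner ℂ _ _ (dFourier uplus (ξ - Complex.arg a))
    (applyMat (Qpm a b sgn ξ) (dFourier uplus (ξ - Complex.arg a)))

/-- The weight `w(v)` determined by `u₊`. -/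
def wWeight (a b : ℂ) (uplus : ℤ → C2) (v : ℝ) : ℝ :=
  ((1/2 : ℂ) *
    ((PpmVal a b uplus false (xiPM a b false 0 v) + PpmVal a b uplus false (xiPM a b false 1 v)) +
     (PpmVal a b uplus true (xiPM a b true 0 v) + PpmVal a b uplus true (xiPM a b true 1 v)))).re

/-- The symbol of the asymptotic-velocity multiplier `e^{iξ₀v̂₀}`. -/
def velMultM (a b : ℂ) (ξ0 ξ : ℝ) : Matrix (Fin 2) (Fin 2) ℂ :=
  (Pmat a b ξ)⁻¹ *
    !![Complex.exp (-(Complex.I) * (ξ0:ℂ) * (pderiv a (ξ + Complex.arg a) : ℝ)), 0;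
       0, Complex.exp (Complex.I * (ξ0:ℂ) * (pderiv a (ξ + Complex.arg a) : ℝ))] * Pmat a b ξ

/-- The Fourier multiplier operator `e^{iξ₀v̂₀} = F⁻¹ P⁻¹ diag(e^{∓iξ₀p'}) P F`. -/
def velMult (a b : ℂ) (ξ0 : ℝ) (u : ℤ → C2) : ℤ → C2 := fun x =>
  (2 * Real.pi)⁻¹ •
    ∫ ξ in (0:ℝ)..(2 * Real.pi),
      Complex.exp (Complex.I * (x:ℂ) * (ξ:ℂ)) • applyMat (velMultM a b ξ0 ξ) (dFourier u ξ)

/-- The oscillatory-integral kernel `I_{±,ij}(t,s)`; `sgn = true` is `+`. -/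
def Ikernel (a b : ℂ) (sgn : Bool) (t s : ℝ) (i j : Fin 2) : ℂ :=
  (2 * Real.pi)⁻¹ *
    ∫ ξ in (0:ℝ)..(2 * Real.pi),
      Complex.exp (Complex.I *
        ((t * ((if sgn then pfun a ξ else -pfun a ξ) + s * (ξ - Complex.arg a)) : ℝ) : ℂ)) *
        (Qpm a b sgn ξ i j)

/-- Inner product of `ℋ`, linear in the FIRST argument (as used in Section 4). -/
def herm (u v : ℤ → C2) : ℂ := ∑' x : ℤ, @inner ℂ _ _ (v x) (u x)

/-- The state `δ_{j,x₀}`. -/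
def deltaState (j : Fin 2) (x0 : ℤ) : ℤ → C2 :=
  fun x => if x = x0 then EuclideanSpace.single j (1:ℂ) else 0

/-- `(Ĉ_N − I)u`. -/
def coinDiff (CN : ℝ → ℝ → Matrix (Fin 2) (Fin 2) ℂ) (u : ℤ → C2) : ℤ → C2 :=
  fun x => coinApply CN u x - u x

/-- The wave operator `W* u₀ = u₀ + Σ_{t≥0} U₀^{−t}(Ĉ_N − I)U(t)u₀`. -/
def waveOp (a b : ℂ) (CN : ℝ → ℝ → Matrix (Fin 2) (Fin 2) ℂ) (u0 : ℤ → C2) : ℤ → C2 :=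
  fun x => u0 x + ∑' t : ℕ, ((U0inv a b)^[t] (coinDiff CN (nlEvolve a b CN t u0))) x

/-- The operator `U₀⁻¹ W* U₀ − W*`. -/
def scatOp (a b : ℂ) (CN : ℝ → ℝ → Matrix (Fin 2) (Fin 2) ℂ) (u0 : ℤ → C2) : ℤ → C2 :=
  fun x => U0inv a b (waveOp a b CN (U0step a b u0)) x - waveOp a b CN u0 x

/-- `ℒ_{(i+1)(j+1)}(λ)`. -/
def Lcal (a b : ℂ) (CN : ℝ → ℝ → Matrix (Fin 2) (Fin 2) ℂ) (i j : Fin 2) (lam : ℝ) : ℂ :=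
  ((lam:ℂ)^(10:ℕ))⁻¹ *
    herm (scatOp a b CN (fun x => if x = 0 then
      (if i = 0 then vec2 ((lam:ℂ)^2) ((lam:ℂ)^3) else vec2 ((lam:ℂ)^3) ((lam:ℂ)^2)) else 0))
      (deltaState j 0)

/-- `D_λ g(λ) = λ⁻¹(g(2λ) − g(λ))`. -/
def Dlam (g : ℝ → ℂ) (lam : ℝ) : ℂ := ((lam:ℂ))⁻¹ * (g (2*lam) - g lam)

/-- `l¹_t l²_x` norm. -/
def l1l2 (F : ℕ → ℤ → C2) : ℝ := ∑' t : ℕ, lpNorm 2 (F t)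

/-- `l^{6/5}_t l¹_x` norm. -/
def l65l1 (F : ℕ → ℤ → C2) : ℝ := (∑' t : ℕ, lpNorm 1 (F t) ^ ((6:ℝ)/5)) ^ ((5:ℝ)/6)

/-- `l⁶_t l^∞_x` norm. -/
def l6linf (F : ℕ → ℤ → C2) : ℝ := (∑' t : ℕ, linfNorm (F t) ^ (6:ℝ)) ^ ((1:ℝ)/6)

/-- `l^∞_t l²_x` norm. -/
def linfl2 (F : ℕ → ℤ → C2) : ℝ := ⨆ t : ℕ, lpNorm 2 (F t)

/-- The Strichartz norm `‖F‖_{Stz} = max(‖F‖_{l^∞l²}, ‖F‖_{l⁶l^∞})`. -/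
def StzNorm (F : ℕ → ℤ → C2) : ℝ := max (linfl2 F) (l6linf F)

/-- The retarded sum `Σ_{s=0}^t U₀^{t−s} f(s)`. -/
def retSum (a b : ℂ) (f : ℕ → ℤ → C2) (t : ℕ) : ℤ → C2 :=
  fun x => ∑ s ∈ Finset.range (t+1), linEvolve a b (t - s) (f s) x

/-- The rotation matrix `R(θ)`. -/
def rotMat (θ : ℝ) : Matrix (Fin 2) (Fin 2) ℂ :=
  !![((Real.cos θ : ℝ) : ℂ), -((Real.sin θ : ℝ) : ℂ);
     ((Real.sin θ : ℝ) : ℂ), ((Real.cos θ : ℝ) : ℂ)]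

lemma auxD_pos {r : ℝ} (hr0 : 0 < r) (hr1 : r < 1) (ξ : ℝ) :
    0 < 1 - r^2 * Real.cos ξ^2 := by
  nlinarith [Real.cos_sq_le_one ξ, sq_nonneg r, sq_nonneg (Real.cos ξ)]

lemma aux_d1 {r : ℝ} (hr0 : 0 < r) (hr1 : r < 1) (ξ : ℝ) :
    HasDerivAt (fun ζ : ℝ => Real.arccos (r * Real.cos ζ))
      (r * Real.sin ξ / Real.sqrt (1 - r^2 * Real.cos ξ^2)) ξ := by
  have hD := auxD_pos hr0 hr1 ξ
  have habs : (r * Real.cos ξ)^2 < 1 := by nlinarith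
  have h1 : r * Real.cos ξ ≠ -1 := by intro h; rw [h] at habs; norm_num at habs
  have h2 : r * Real.cos ξ ≠ 1 := by intro h; rw [h] at habs; norm_num at habs
  have h := (Real.hasDerivAt_arccos h1 h2).comp ξ ((Real.hasDerivAt_cos ξ).const_mul r)
  refine h.congr_deriv (Eq.symm ?_)
  have he : 1 - (r*Real.cos ξ)^2 = 1 - r^2 * Real.cos ξ^2 := by ring
  rw [he]
  have hs : Real.sqrt (1 - r^2 * Real.cos ξ^2) ≠ 0 := by positivity
  field_simp

lemma aux_dD {r : ℝ} (ξ : ℝ) :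
    HasDerivAt (fun ζ : ℝ => 1 - r^2 * Real.cos ζ^2)
      (2 * r^2 * Real.cos ξ * Real.sin ξ) ξ := by
  have h := (((Real.hasDerivAt_cos ξ).pow 2).const_mul (r^2)).const_sub 1
  refine h.congr_deriv (Eq.symm ?_)
  simp
  ring

lemma aux_d2 {r : ℝ} (hr0 : 0 < r) (hr1 : r < 1) (ξ : ℝ) :
    HasDerivAt (fun ζ : ℝ => r * Real.sin ζ / Real.sqrt (1 - r^2 * Real.cos ζ^2))
      (r * (1 - r^2) * Real.cos ξ / (Real.sqrt (1 - r^2 * Real.cos ξ^2))^3) ξ := by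
  have hD := auxD_pos hr0 hr1 ξ
  have hsne : Real.sqrt (1 - r^2 * Real.cos ξ^2) ≠ 0 := by positivity
  have hsq : HasDerivAt (fun ζ : ℝ => Real.sqrt (1 - r^2 * Real.cos ζ^2))
      ((2 * r^2 * Real.cos ξ * Real.sin ξ) / (2 * Real.sqrt (1 - r^2 * Real.cos ξ^2))) ξ :=
    (aux_dD ξ).sqrt hD.ne'
  have h := ((Real.hasDerivAt_sin ξ).const_mul r).div hsq hsne
  refine h.congr_deriv (Eq.symm ?_)
  have hs2 : Real.sqrt (1 - r^2 * Real.cos ξ^2) ^ 2 = 1 - r^2 * Real.cos ξ^2 :=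
    Real.sq_sqrt hD.le
  have hsc := Real.sin_sq_add_cos_sq ξ
  field_simp
  linear_combination (-Real.cos ξ) * hs2 + (r^2 * Real.cos ξ) * hsc

lemma aux_d3 {r : ℝ} (hr0 : 0 < r) (hr1 : r < 1) (ξ : ℝ) :
    HasDerivAt (fun ζ : ℝ => r * (1 - r^2) * Real.cos ζ / (Real.sqrt (1 - r^2 * Real.cos ζ^2))^3)
      (-(r * (1 - r^2) * (1 + 2*r^2*Real.cos ξ^2) * Real.sin ξ) /
        (Real.sqrt (1 - r^2 * Real.cos ξ^2))^5) ξ := by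
  have hD := auxD_pos hr0 hr1 ξ
  have hsne : Real.sqrt (1 - r^2 * Real.cos ξ^2) ≠ 0 := by positivity
  have hsq : HasDerivAt (fun ζ : ℝ => Real.sqrt (1 - r^2 * Real.cos ζ^2))
      ((2 * r^2 * Real.cos ξ * Real.sin ξ) / (2 * Real.sqrt (1 - r^2 * Real.cos ξ^2))) ξ :=
    (aux_dD ξ).sqrt hD.ne'
  have hcube := hsq.pow 3
  have hnum : HasDerivAt (fun ζ : ℝ => r * (1 - r^2) * Real.cos ζ)
      (r * (1 - r^2) * (-Real.sin ξ)) ξ := (Real.hasDerivAt_cos ξ).const_mul _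
  have hcne : (Real.sqrt (1 - r^2 * Real.cos ξ^2))^3 ≠ 0 := pow_ne_zero _ hsne
  have h := hnum.div hcube hcne
  refine h.congr_deriv (Eq.symm ?_)
  have hs2 : Real.sqrt (1 - r^2 * Real.cos ξ^2) ^ 2 = 1 - r^2 * Real.cos ξ^2 :=
    Real.sq_sqrt hD.le
  have hsc := Real.sin_sq_add_cos_sq ξ
  push_cast
  simp only [Pi.pow_apply]
  field_simp
  linear_combination ((1 - r^2) * Real.sin ξ) * hs2

lemma iter2_eq {r : ℝ} (hr0 : 0 < r) (hr1 : r < 1) :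
    iteratedDeriv 2 (fun ζ : ℝ => Real.arccos (r * Real.cos ζ)) =
      fun ξ => r * (1 - r^2) * Real.cos ξ / (Real.sqrt (1 - r^2 * Real.cos ξ^2))^3 := by
  have h1 : deriv (fun ζ : ℝ => Real.arccos (r * Real.cos ζ)) =
      fun ξ => r * Real.sin ξ / Real.sqrt (1 - r^2 * Real.cos ξ^2) :=
    funext fun ξ => (aux_d1 hr0 hr1 ξ).deriv
  rw [iteratedDeriv_succ, iteratedDeriv_one, h1]
  exact funext fun ξ => (aux_d2 hr0 hr1 ξ).deriv

lemma iter3_eq {r : ℝ} (hr0 : 0 < r) (hr1 : r < 1) :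
    iteratedDeriv 3 (fun ζ : ℝ => Real.arccos (r * Real.cos ζ)) =
      fun ξ => -(r * (1 - r^2) * (1 + 2*r^2*Real.cos ξ^2) * Real.sin ξ) /
        (Real.sqrt (1 - r^2 * Real.cos ξ^2))^5 := by
  rw [iteratedDeriv_succ, iter2_eq hr0 hr1]
  exact funext fun ξ => (aux_d3 hr0 hr1 ξ).deriv

set_option maxHeartbeats 1000000 in
lemma main_ineq {r : ℝ} (hr0 : 0 < r) (hr1 : r < 1) (ξ : ℝ) :
    ((1 + 2*r^2)/(1 - r^2))^2 *
        (iteratedDeriv 2 (fun ζ : ℝ => Real.arccos (r * Real.cos ζ)) ξ)^2 +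
      (iteratedDeriv 3 (fun ζ : ℝ => Real.arccos (r * Real.cos ζ)) ξ)^2 ≥
    r^2 * (1 - r^2)^2 := by
  rw [iter2_eq hr0 hr1, iter3_eq hr0 hr1]
  have hD := auxD_pos hr0 hr1 ξ
  set s := Real.sqrt (1 - r^2 * Real.cos ξ^2) with hsdef
  have hspos : 0 < s := Real.sqrt_pos.mpr hD
  have hs2 : s^2 = 1 - r^2 * Real.cos ξ^2 := Real.sq_sqrt hD.le
  have hsle : s ≤ 1 := by nlinarith [hspos, hs2, sq_nonneg (r * Real.cos ξ)]
  have hsc := Real.sin_sq_add_cos_sq ξ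
  have hr2 : (0:ℝ) < 1 - r^2 := by nlinarith
  simp only
  have e2 : ((1 + 2*r^2)/(1 - r^2))^2 * (r * (1 - r^2) * Real.cos ξ / s^3)^2 =
      (1 + 2*r^2)^2 * r^2 * Real.cos ξ^2 / s^6 := by
    field_simp
  have e3 : (-(r * (1 - r^2) * (1 + 2*r^2*Real.cos ξ^2) * Real.sin ξ) / s^5)^2 =
      r^2 * (1 - r^2)^2 * (1 + 2*r^2*Real.cos ξ^2)^2 * Real.sin ξ^2 / s^10 := by
    field_simp
  rw [e2, e3]
  have hs6 : 0 < s^6 := by positivity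
  have hs10 : 0 < s^10 := by positivity
  have t2 : (1 + 2*r^2)^2 * r^2 * Real.cos ξ^2 / s^6 ≥ r^2 * (1-r^2)^2 * Real.cos ξ^2 := by
    rw [ge_iff_le, le_div_iff₀ hs6]
    have h6 : s^6 ≤ 1 := pow_le_one₀ hspos.le hsle
    have hA : (1-r^2)^2 * s^6 ≤ (1+2*r^2)^2 := by nlinarith [sq_nonneg r, hs6]
    have hx : (0:ℝ) ≤ r^2 * Real.cos ξ^2 := by positivity
    nlinarith [mul_le_mul_of_nonneg_left hA hx]
  have t3 : r^2 * (1 - r^2)^2 * (1 + 2*r^2*Real.cos ξ^2)^2 * Real.sin ξ^2 / s^10 ≥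
      r^2 * (1-r^2)^2 * Real.sin ξ^2 := by
    rw [ge_iff_le, le_div_iff₀ hs10]
    have h10 : s^10 ≤ 1 := pow_le_one₀ hspos.le hsle
    have hA : s^10 ≤ (1+2*r^2*Real.cos ξ^2)^2 := by nlinarith [sq_nonneg (r*Real.cos ξ), hs10]
    have hx : (0:ℝ) ≤ r^2 * (1-r^2)^2 * Real.sin ξ^2 := by positivity
    nlinarith [mul_le_mul_of_nonneg_left hA hx]
  have hfin : r^2*(1-r^2)^2*Real.cos ξ^2 + r^2*(1-r^2)^2*Real.sin ξ^2 = r^2*(1-r^2)^2 := by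
    linear_combination (r^2*(1-r^2)^2)*hsc
  linarith [t2, t3]

/-- non-degeneracy of the phase `p(ξ) = arccos(r cos ξ)`:
`((1+2r²)/(1−r²))² p''(ξ)² + p'''(ξ)² ≥ r²(1−r²)²`, so `p''` and `p'''` never vanish
simultaneously, and `max(|p''|,|p'''|)` is bounded below by a positive constant. -/
theorem phase_nondegeneracy (r : ℝ) (hr0 : 0 < r) (hr1 : r < 1) :
    (∀ ξ : ℝ,
      ((1 + 2*r^2)/(1 - r^2))^2 *
          (iteratedDeriv 2 (fun ζ : ℝ => Real.arccos (r * Real.cos ζ)) ξ)^2 +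
        (iteratedDeriv 3 (fun ζ : ℝ => Real.arccos (r * Real.cos ζ)) ξ)^2 ≥
      r^2 * (1 - r^2)^2) ∧
    ∃ c > (0:ℝ), ∀ ξ : ℝ,
      c ≤ max |iteratedDeriv 2 (fun ζ : ℝ => Real.arccos (r * Real.cos ζ)) ξ|
              |iteratedDeriv 3 (fun ζ : ℝ => Real.arccos (r * Real.cos ζ)) ξ| := by
  have hr2 : (0:ℝ) < 1 - r^2 := by nlinarith
  refine ⟨fun ξ => main_ineq hr0 hr1 ξ, ?_⟩
  set A := ((1 + 2*r^2)/(1 - r^2)) with hA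
  have hApos : 0 < A := by positivity
  refine ⟨Real.sqrt (r^2*(1-r^2)^2/(A^2+1)), Real.sqrt_pos.mpr (by positivity), fun ξ => ?_⟩
  set q2 := iteratedDeriv 2 (fun ζ : ℝ => Real.arccos (r * Real.cos ζ)) ξ with hq2def
  set q3 := iteratedDeriv 3 (fun ζ : ℝ => Real.arccos (r * Real.cos ζ)) ξ with hq3def
  have h := main_ineq hr0 hr1 ξ
  set M := max |q2| |q3| with hMdef
  have hM0 : 0 ≤ M := le_trans (abs_nonneg _) (le_max_left _ _)
  have h2 : |q2| ≤ M := le_max_left _ _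
  have h3 : |q3| ≤ M := le_max_right _ _
  have hq2 : q2^2 ≤ M^2 := by
    rw [← sq_abs q2]; exact pow_le_pow_left₀ (abs_nonneg _) h2 2
  have hq3 : q3^2 ≤ M^2 := by
    rw [← sq_abs q3]; exact pow_le_pow_left₀ (abs_nonneg _) h3 2
  have hKM : r^2*(1-r^2)^2/(A^2+1) ≤ M^2 := by
    rw [div_le_iff₀ (by positivity)]
    nlinarith [mul_le_mul_of_nonneg_left hq2 (sq_nonneg A), hq3, h]
  calc Real.sqrt (r^2*(1-r^2)^2/(A^2+1)) ≤ Real.sqrt (M^2) := Real.sqrt_le_sqrt hKM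
    _ = M := Real.sqrt_sq hM0
end
end

section
/- Explicit traveling-wave (soliton) solution: let p ≥ 1 be an integer, g < 0, and a > 0 satisfy π/4 + g·a^{2p} = 0. For the nonlinear quantum walk with coin C(s₁,s₂) = R(π/4 + g(s₁+s₂)^p), define φ(t) ∈ l²(ℤ;ℂ²) by φ(t,x) = (a,0)ᵗ if x = −t and φ(t,x) = (0,0)ᵗ otherwise. Then φ(t) = U φ(t−1) for every integer t ≥ 1; that is, U(t)φ(0) = φ(t) for all t ≥ 0, so the walk started at φ(0) is an exact traveling wave of velocity −1 with ‖U(t)φ(0)‖_{l^∞} = a for all t. -/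
noncomputable section

open Filter MeasureTheory
open scoped BigOperators ComplexConjugate

/-- `vec2 0 0` is the zero vector. -/
lemma vec2_zero_zero : (vec2 0 0 : C2) = 0 := by
  ext i; fin_cases i <;> simp [vec2]

/-- Key step lemma: one step of the walk moves the soliton left by one. -/
lemma soliton_step (p : ℕ) (g : ℝ) (a : ℝ) (ha : 0 < a)
    (hres : Real.pi/4 + g * a^(2*p) = 0) (c : ℤ) :
    genStep (fun s₁ s₂ => rotMat (Real.pi/4 + g*(s₁+s₂)^p))
        (fun x : ℤ => if x = c then vec2 (a:ℂ) 0 else 0) =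
      (fun x : ℤ => if x = c - 1 then vec2 (a:ℂ) 0 else 0) := by
  have hcoin : coinApply (fun s₁ s₂ => rotMat (Real.pi/4 + g*(s₁+s₂)^p))
      (fun x : ℤ => if x = c then vec2 (a:ℂ) 0 else 0) =
      (fun x : ℤ => if x = c then vec2 (a:ℂ) 0 else 0) := by
    funext y
    by_cases hy : y = c
    · have h0 : (vec2 (a:ℂ) 0) 0 = (a:ℂ) := by simp [vec2]
      have h1 : (vec2 (a:ℂ) 0) 1 = 0 := by simp [vec2]
      have hang : Real.pi/4 + g*(‖(vec2 (a:ℂ) 0) 0‖^2 + ‖(vec2 (a:ℂ) 0) 1‖^2)^p = 0 := by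
        rw [h0, h1]
        have hz : ‖(0:ℂ)‖^2 = (0:ℝ) := by simp
        rw [hz, add_zero, Complex.norm_real, Real.norm_eq_abs, abs_of_pos ha, ← pow_mul]
        exact hres
      subst hy
      simp only [coinApply, if_true]
      rw [hang]
      have : rotMat 0 = 1 := by simp [rotMat, Matrix.one_fin_two]
      rw [this]
      simp [applyMat]
    · simp only [coinApply, if_neg hy]
      simp [applyMat]
  funext x
  simp only [genStep, hcoin, shiftS]
  have h1 : ((if x - 1 = c then vec2 (a:ℂ) 0 else 0) : C2) 1 = 0 := by
    split <;> simp [vec2]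
  rw [h1]
  by_cases hx : x = c - 1
  · have : x + 1 = c := by omega
    simp [this, hx, vec2]
  · have : ¬ (x + 1 = c) := by omega
    simp only [this, if_neg hx, if_neg this]
    exact vec2_zero_zero

/-- Norm of the soliton profile. -/
lemma soliton_norm (a : ℝ) (ha : 0 < a) : ‖(vec2 (a:ℂ) 0 : C2)‖ = a := by
  rw [EuclideanSpace.norm_eq]
  simp [vec2, Fin.sum_univ_two, abs_of_pos ha, Real.sqrt_sq ha.le]

/-- explicit traveling-wave (soliton) solution `φ(t) = a δ_{1,−t}` of the
nonlinear quantum walk with coin `C(s₁,s₂) = R(π/4 + g(s₁+s₂)^p)`, `π/4 + g a^{2p} = 0`. -/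
theorem explicit_soliton
    (p : ℕ) (hp : 1 ≤ p) (g : ℝ) (hg : g < 0) (a : ℝ) (ha : 0 < a)
    (hres : Real.pi/4 + g * a^(2*p) = 0) :
    (∀ t : ℕ,
      genStep (fun s₁ s₂ => rotMat (Real.pi/4 + g*(s₁+s₂)^p))
        (fun x : ℤ => if x = -(t:ℤ) then vec2 (a:ℂ) 0 else 0) =
      (fun x : ℤ => if x = -((t:ℤ)+1) then vec2 (a:ℂ) 0 else 0)) ∧
    (∀ t : ℕ,
      genEvolve (fun s₁ s₂ => rotMat (Real.pi/4 + g*(s₁+s₂)^p)) t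
        (fun x : ℤ => if x = 0 then vec2 (a:ℂ) 0 else 0) =
      (fun x : ℤ => if x = -(t:ℤ) then vec2 (a:ℂ) 0 else 0)) ∧
    (∀ t : ℕ,
      linfNorm (genEvolve (fun s₁ s₂ => rotMat (Real.pi/4 + g*(s₁+s₂)^p)) t
        (fun x : ℤ => if x = 0 then vec2 (a:ℂ) 0 else 0)) = a) := by

  have hstep := soliton_step p g a ha hres
  have h1 : ∀ t : ℕ,
      genStep (fun s₁ s₂ => rotMat (Real.pi/4 + g*(s₁+s₂)^p))
        (fun x : ℤ => if x = -(t:ℤ) then vec2 (a:ℂ) 0 else 0) =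
      (fun x : ℤ => if x = -((t:ℤ)+1) then vec2 (a:ℂ) 0 else 0) := by
    intro t
    have he : -((t:ℤ)+1) = -(t:ℤ) - 1 := by ring
    rw [he]
    exact hstep _
  have h2 : ∀ t : ℕ,
      genEvolve (fun s₁ s₂ => rotMat (Real.pi/4 + g*(s₁+s₂)^p)) t
        (fun x : ℤ => if x = 0 then vec2 (a:ℂ) 0 else 0) =
      (fun x : ℤ => if x = -(t:ℤ) then vec2 (a:ℂ) 0 else 0) := by
    intro t
    induction t with
    | zero => simp [genEvolve]
    | succ n ih =>
      rw [genEvolve, Function.iterate_succ_apply', ← genEvolve, ih, h1]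
      push_cast
      rfl
  refine ⟨h1, h2, fun t => ?_⟩
  rw [h2 t, linfNorm]
  apply le_antisymm
  · apply ciSup_le
    intro x
    split
    · rw [soliton_norm a ha]
    · simpa using ha.le
  · have hb : BddAbove (Set.range fun x : ℤ =>
        ‖(if x = -(t:ℤ) then vec2 (a:ℂ) 0 else 0 : C2)‖) := by
      refine ⟨a, ?_⟩
      rintro r ⟨x, rfl⟩
      dsimp only
      split
      · rw [soliton_norm a ha]
      · simpa using ha.le
    have := le_ciSup hb (-(t:ℤ))
    simpa [soliton_norm a ha] using this
end
end

section
/- Instability of the explicit soliton: let p ≥ 1 be an integer, g < 0, and a > 0 satisfy π/4 + g·a^{2p} = 0, and consider the nonlinear quantum walk with coin C(s₁,s₂) = R(π/4 + g(s₁+s₂)^p). For 0 < ε < 1 let φ_ε(0) = a(1−ε)δ_{1,0} and φ_ε(t) = U(t)φ_ε(0). Then for every t ≥ 0, φ_ε(t,−t) has the form (c_t, 0)ᵗ, the edge values satisfy ‖φ_ε(t,−t)‖_{ℂ²} = |cos(π/4 + g‖φ_ε(t−1,−(t−1))‖_{ℂ²}^{2p})| · ‖φ_ε(t−1,−(t−1))‖_{ℂ²}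 for t ≥ 1, and there exists ε' > 0 (depending only on ε and p) such that ‖φ_ε(t,−t)‖_{ℂ²} ≤ (1−ε')ᵗ a(1−ε) for all t ≥ 0; in particular ‖φ_ε(t,−t)‖_{ℂ²} → 0 as t → ∞. -/
noncomputable section

open Filter MeasureTheory
open scoped BigOperators ComplexConjugate

/-! ### Auxiliary lemmas -/

lemma siAux_applyMat_vec2 (M : Matrix (Fin 2) (Fin 2) ℂ) (z w : ℂ) :
    applyMat M (vec2 z w) = vec2 (M 0 0 * z + M 0 1 * w) (M 1 0 * z + M 1 1 * w) := by
  show Matrix.toEuclideanLin M (vec2 z w) = _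
  rw [vec2, Matrix.toEuclideanLin_apply]
  congr 1
  funext i
  fin_cases i <;> simp [Matrix.mulVec, dotProduct, Fin.sum_univ_two, vec2]

lemma siAux_vec2_zero : vec2 0 0 = (0 : C2) := by
  ext i; fin_cases i <;> simp [vec2]

@[simp] lemma siAux_vec2_apply0 (z w : ℂ) : (vec2 z w) 0 = z := rfl
@[simp] lemma siAux_vec2_apply1 (z w : ℂ) : (vec2 z w) 1 = w := rfl

lemma siAux_norm_vec2 (r : ℝ) : ‖vec2 (r : ℂ) 0‖ = |r| := by
  simp [vec2, EuclideanSpace.norm_eq, Fin.sum_univ_two, Real.sqrt_sq_eq_abs]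

lemma siAux_applyMat_zero (M : Matrix (Fin 2) (Fin 2) ℂ) : applyMat M 0 = 0 := by
  simp [applyMat]

/-- The edge sequence. -/
def siSeq (p : ℕ) (g a ε : ℝ) : ℕ → ℝ
  | 0 => a * (1 - ε)
  | t+1 => Real.cos (Real.pi/4 + g * |siSeq p g a ε t| ^ (2*p)) * siSeq p g a ε t

lemma siAux_main (p : ℕ) (g a ε : ℝ) (t : ℕ) :
    (∀ x : ℤ, x < -(t:ℤ) →
      genEvolve (fun s₁ s₂ => rotMat (Real.pi/4 + g*(s₁+s₂)^p)) t
        (fun x : ℤ => if x = 0 then vec2 ((a*(1-ε) : ℝ) : ℂ) 0 else 0) x = 0) ∧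
    genEvolve (fun s₁ s₂ => rotMat (Real.pi/4 + g*(s₁+s₂)^p)) t
        (fun x : ℤ => if x = 0 then vec2 ((a*(1-ε) : ℝ) : ℂ) 0 else 0) (-(t:ℤ))
      = vec2 ((siSeq p g a ε t : ℝ) : ℂ) 0 := by
  set C : ℝ → ℝ → Matrix (Fin 2) (Fin 2) ℂ :=
    fun s₁ s₂ => rotMat (Real.pi/4 + g*(s₁+s₂)^p) with hC
  set u0 : ℤ → C2 := fun x : ℤ => if x = 0 then vec2 ((a*(1-ε) : ℝ) : ℂ) 0 else 0 with hu0
  induction t with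
  | zero =>
    constructor
    · intro x hx
      simp only [genEvolve, Function.iterate_zero, id_eq, hu0]
      rw [if_neg (by omega)]
    · simp [genEvolve, hu0, siSeq]
  | succ t ih =>
    obtain ⟨ihz, ihe⟩ := ih
    set u : ℤ → C2 := genEvolve C t u0 with hu
    have hstep : genEvolve C (t+1) u0 = genStep C u := by
      rw [genEvolve, Function.iterate_succ_apply']; rfl
    have hzero : ∀ y : ℤ, y < -(t:ℤ) → coinApply C u y = 0 := by
      intro y hy
      rw [coinApply, ihz y hy, siAux_applyMat_zero]
    have hedge : coinApply C u (-(t:ℤ)) =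
        vec2 ((siSeq p g a ε (t+1) : ℝ) : ℂ)
          ((Real.sin (Real.pi/4 + g * |siSeq p g a ε t| ^ (2*p)) : ℝ) * (siSeq p g a ε t : ℝ)) := by
      rw [coinApply, ihe]
      set c := siSeq p g a ε t with hc
      have h1 : ‖((c:ℝ):ℂ)‖^2 = |c|^2 := by
        rw [Complex.norm_real, Real.norm_eq_abs]
      have h2 : (‖(vec2 ((c:ℝ):ℂ) 0) 0‖^2 + ‖(vec2 ((c:ℝ):ℂ) 0) 1‖^2 : ℝ) = |c|^2 := by
        simp [h1]
      have h3 : (|c|^2)^p = |c|^(2*p) := by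
        rw [← pow_mul, mul_comm]
      rw [hC]
      simp only [h2]
      rw [h3, siAux_applyMat_vec2]
      have hr : ∀ θ : ℝ, rotMat θ 0 0 = (Real.cos θ : ℂ) ∧ rotMat θ 0 1 = -(Real.sin θ : ℂ)
          ∧ rotMat θ 1 0 = (Real.sin θ : ℂ) ∧ rotMat θ 1 1 = (Real.cos θ : ℂ) := by
        intro θ; refine ⟨rfl, rfl, rfl, rfl⟩
      obtain ⟨e1, e2, e3, e4⟩ := hr (Real.pi/4 + g * |c|^(2*p))
      rw [e1, e2, e3, e4]
      have hs : ((siSeq p g a ε (t+1) : ℝ) : ℂ)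
          = (Real.cos (Real.pi/4 + g * |c|^(2*p)) : ℂ) * ((c:ℝ):ℂ) + (-(Real.sin (Real.pi/4 + g * |c|^(2*p)) : ℂ)) * 0 := by
        show ((Real.cos (Real.pi/4 + g * |siSeq p g a ε t|^(2*p)) * siSeq p g a ε t : ℝ) : ℂ) = _
        push_cast
        ring
      rw [hs]
      push_cast
      ring_nf
    constructor
    · intro x hx
      rw [hstep]
      show vec2 (coinApply C u (x+1) 0) (coinApply C u (x-1) 1) = 0
      rw [hzero (x+1) (by push_cast at hx ⊢; omega), hzero (x-1) (by push_cast at hx ⊢; omega)]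
      exact siAux_vec2_zero
    · rw [hstep]
      show vec2 (coinApply C u (-((t:ℤ)+1)+1) 0) (coinApply C u (-((t:ℤ)+1)-1) 1)
          = vec2 ((siSeq p g a ε (t+1) : ℝ) : ℂ) 0
      rw [hzero (-((t:ℤ)+1)-1) (by omega)]
      have h2 : coinApply C u (-((t:ℤ)+1)+1) = coinApply C u (-(t:ℤ)) := by
        norm_num
      rw [h2, hedge]
      rfl


/-- instability of the explicit soliton — the perturbed initial datum
`a(1−ε)δ_{1,0}` keeps the form `(c_t,0)ᵗ` at the left edge `x = −t`, satisfies the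
edge recursion, and its edge values decay geometrically to `0`. -/
theorem soliton_instability
    (p : ℕ) (hp : 1 ≤ p) (g : ℝ) (hg : g < 0) (a : ℝ) (ha : 0 < a)
    (hres : Real.pi/4 + g * a^(2*p) = 0)
    (ε : ℝ) (hε0 : 0 < ε) (hε1 : ε < 1) :
    (∀ t : ℕ,
      (genEvolve (fun s₁ s₂ => rotMat (Real.pi/4 + g*(s₁+s₂)^p)) t
        (fun x : ℤ => if x = 0 then vec2 ((a*(1-ε) : ℝ) : ℂ) 0 else 0)) (-(t:ℤ)) 1 = 0) ∧
    (∀ s : ℕ,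
      ‖(genEvolve (fun s₁ s₂ => rotMat (Real.pi/4 + g*(s₁+s₂)^p)) (s+1)
          (fun x : ℤ => if x = 0 then vec2 ((a*(1-ε) : ℝ) : ℂ) 0 else 0)) (-((s:ℤ)+1))‖ =
        |Real.cos (Real.pi/4 + g *
          ‖(genEvolve (fun s₁ s₂ => rotMat (Real.pi/4 + g*(s₁+s₂)^p)) s
              (fun x : ℤ => if x = 0 then vec2 ((a*(1-ε) : ℝ) : ℂ) 0 else 0)) (-(s:ℤ))‖^(2*p))| *
        ‖(genEvolve (fun s₁ s₂ => rotMat (Real.pi/4 + g*(s₁+s₂)^p)) s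
            (fun x : ℤ => if x = 0 then vec2 ((a*(1-ε) : ℝ) : ℂ) 0 else 0)) (-(s:ℤ))‖) ∧
    (∃ ε' > (0:ℝ), ∀ t : ℕ,
      ‖(genEvolve (fun s₁ s₂ => rotMat (Real.pi/4 + g*(s₁+s₂)^p)) t
          (fun x : ℤ => if x = 0 then vec2 ((a*(1-ε) : ℝ) : ℂ) 0 else 0)) (-(t:ℤ))‖ ≤
        (1-ε')^t * (a*(1-ε))) ∧
    Tendsto (fun t : ℕ =>
      ‖(genEvolve (fun s₁ s₂ => rotMat (Real.pi/4 + g*(s₁+s₂)^p)) t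
          (fun x : ℤ => if x = 0 then vec2 ((a*(1-ε) : ℝ) : ℂ) 0 else 0)) (-(t:ℤ))‖)
      atTop (nhds 0) := by
  
  have hmain := siAux_main p g a ε
  have hnorm : ∀ t : ℕ,
      ‖(genEvolve (fun s₁ s₂ => rotMat (Real.pi/4 + g*(s₁+s₂)^p)) t
        (fun x : ℤ => if x = 0 then vec2 ((a*(1-ε) : ℝ) : ℂ) 0 else 0)) (-(t:ℤ))‖
      = |siSeq p g a ε t| := by
    intro t
    rw [(hmain t).2, siAux_norm_vec2]
  -- basic positivity facts
  have hc0 : 0 < a * (1-ε) := mul_pos ha (by linarith)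
  have h2p : 1 ≤ 2*p := by omega
  have hlt1 : (1-ε)^(2*p) < 1 :=
    pow_lt_one₀ (by linarith) (by linarith) (by omega)
  have hδdef : Real.pi/4 = -g * a^(2*p) := by linarith
  set δ : ℝ := (-g) * a^(2*p) * (1 - (1-ε)^(2*p)) with hδ
  have hδpos : 0 < δ := by
    apply mul_pos (mul_pos (by linarith) (pow_pos ha _))
    linarith
  have hδle : δ ≤ Real.pi/4 := by
    rw [hδdef]
    have h1 : (0:ℝ) ≤ (1-ε)^(2*p) := pow_nonneg (by linarith) _
    nlinarith [pow_pos ha (2*p)]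
  have hπ : Real.pi/4 < Real.pi/2 := by
    have := Real.pi_pos; linarith
  have hπ4 : Real.pi/4 ≤ Real.pi := by linarith [Real.pi_pos]
  have hneg : -(Real.pi/2) ≤ 0 := by linarith [Real.pi_pos]
  set ε' : ℝ := 1 - Real.cos δ with hε'
  have hcosδlt : Real.cos δ < 1 := by
    calc Real.cos δ < Real.cos 0 := by
          apply Real.cos_lt_cos_of_nonneg_of_le_pi le_rfl
            (by linarith [Real.pi_pos]) hδpos
      _ = 1 := Real.cos_zero
  have hcosδpos : 0 < Real.cos δ :=
    Real.cos_pos_of_mem_Ioo ⟨by linarith [Real.pi_pos], by linarith⟩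
  have hε'pos : 0 < ε' := by rw [hε']; linarith
  -- key induction on the sequence
  have hkey : ∀ t : ℕ, 0 ≤ siSeq p g a ε t ∧
      siSeq p g a ε t ≤ (1-ε')^t * (a*(1-ε)) := by
    intro t
    induction t with
    | zero => exact ⟨le_of_lt hc0, by simp [siSeq]⟩
    | succ t ih =>
      obtain ⟨h0, h1⟩ := ih
      set c := siSeq p g a ε t with hc
      have hle1 : (1-ε')^t ≤ 1 := by
        apply pow_le_one₀ (by rw [hε']; linarith) (by rw [hε']; linarith)
      have hca : c ≤ a*(1-ε) := by
        calc c ≤ (1-ε')^t * (a*(1-ε)) := h1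
          _ ≤ 1 * (a*(1-ε)) := by
              apply mul_le_mul_of_nonneg_right hle1 (le_of_lt hc0)
          _ = a*(1-ε) := one_mul _
      set θ : ℝ := Real.pi/4 + g * |c| ^ (2*p) with hθ
      have habs : |c| = c := abs_of_nonneg h0
      have hpow : c^(2*p) ≤ (a*(1-ε))^(2*p) := pow_le_pow_left₀ h0 hca _
      have hth1 : δ ≤ θ := by
        rw [hθ, habs, hδ, hδdef]
        have : (a*(1-ε))^(2*p) = a^(2*p) * (1-ε)^(2*p) := mul_pow _ _ _
        nlinarith [pow_pos ha (2*p)]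
      have hth2 : θ ≤ Real.pi/4 := by
        rw [hθ]
        have : g * |c|^(2*p) ≤ 0 :=
          mul_nonpos_of_nonpos_of_nonneg (le_of_lt hg) (pow_nonneg (abs_nonneg _) _)
        linarith
      have hθπ2 : -(Real.pi/2) ≤ θ := le_trans hneg (le_trans hδpos.le hth1)
      have hθπ : θ ≤ Real.pi := hth2.trans hπ4
      have hcos0 : 0 ≤ Real.cos θ :=
        Real.cos_nonneg_of_mem_Icc ⟨hθπ2, by linarith⟩
      have hcosle : Real.cos θ ≤ Real.cos δ := by
        rcases eq_or_lt_of_le hth1 with h | h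
        · rw [h]
        · exact le_of_lt (Real.cos_lt_cos_of_nonneg_of_le_pi (le_of_lt hδpos) hθπ h)
      constructor
      · show 0 ≤ Real.cos θ * c
        exact mul_nonneg hcos0 h0
      · show Real.cos θ * c ≤ (1-ε')^(t+1) * (a*(1-ε))
        have : Real.cos θ * c ≤ Real.cos δ * ((1-ε')^t * (a*(1-ε))) := by
          apply mul_le_mul hcosle h1 h0 (le_of_lt hcosδpos)
        calc Real.cos θ * c ≤ Real.cos δ * ((1-ε')^t * (a*(1-ε))) := this
          _ = (1-ε')^(t+1) * (a*(1-ε)) := by rw [hε']; ring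
  refine ⟨?_, ?_, ?_, ?_⟩
  · intro t
    rw [(hmain t).2]
    rfl
  · intro s
    have hcast : (-((s:ℤ)+1)) = -(((s+1:ℕ):ℤ)) := by push_cast; ring
    rw [hcast, hnorm (s+1), hnorm s]
    show |Real.cos (Real.pi/4 + g * |siSeq p g a ε s|^(2*p)) * siSeq p g a ε s| = _
    rw [abs_mul]
  · refine ⟨ε', hε'pos, fun t => ?_⟩
    rw [hnorm t, abs_of_nonneg (hkey t).1]
    exact (hkey t).2
  · have hb : Tendsto (fun t : ℕ => (1-ε')^t * (a*(1-ε))) atTop (nhds 0) := by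
      have h0' : (0:ℝ) ≤ 1-ε' := by rw [hε']; linarith
      have h1' : (1-ε') < 1 := by rw [hε']; linarith
      have := tendsto_pow_atTop_nhds_zero_of_lt_one h0' h1'
      simpa using this.mul_const (a*(1-ε))
    apply squeeze_zero (fun t => norm_nonneg _) _ hb
    intro t
    rw [hnorm t, abs_of_nonneg (hkey t).1]
    exact (hkey t).2
end
end
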